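/- Let K be the unit ball of a 2-dimensional real normed space, and suppose K ⊆ K_1 ∪ K_2 ∪ K_3 ∪ K_4 where each K_i is a homothetic copy of K with ratio √2/2 (so diam K_i = √2 in the norm). Then for any Borel probability measure ν on K, Δ(ν) = ∫∫ |x−y| dν(x) dν(y) ≤ 2 − (2 − √2)/4 = 3/2 + √2/4. -/

import Mathlib

open MeasureTheory Pointwise

theorem stmt_3 {E : Type*} [NormedAddCommGroup E] [NormedSpace ℝ E]
    [MeasurableSpace E] [BorelSpace E] [FiniteDimensional ℝ E]
    (hdim : Module.finrank ℝ E = 2)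
    (a : Fin 4 → E)
    (hcover : Metric.closedBall (0 : E) 1 ⊆
      ⋃ i, a i +ᵥ (Real.sqrt 2 / 2) • Metric.closedBall (0 : E) 1)
    (ν : Measure E) [IsProbabilityMeasure ν]
    (hν : ν (Metric.closedBall (0 : E) 1) = 1) :
    (∫ x, ∫ y, ‖x - y‖ ∂ν ∂ν) ≤ 3 / 2 + Real.sqrt 2 / 4 := by
  have hs2 : (0:ℝ) ≤ Real.sqrt 2 / 2 := by positivity
  set K : Set E := Metric.closedBall (0 : E) 1 with hK
  have hBeq : ∀ i : Fin 4, a i +ᵥ (Real.sqrt 2 / 2) • K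
      = Metric.closedBall (a i) (Real.sqrt 2 / 2) := by
    intro i
    rw [hK, smul_closedBall _ _ zero_le_one, smul_zero, Real.norm_of_nonneg hs2, mul_one,
      Metric.vadd_closedBall, vadd_eq_add, add_zero]
  -- the pieces
  set C : ℕ → Set E := fun n => if h : n < 4 then
      K ∩ Metric.closedBall (a ⟨n, h⟩) (Real.sqrt 2 / 2) else ∅ with hC
  set D : ℕ → Set E := disjointed C with hD
  have hCK : ∀ n, C n ⊆ K := by
    intro n
    by_cases h : n < 4
    · rw [hC]; simp only [dif_pos h]; exact Set.inter_subset_left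
    · rw [hC]; simp only [dif_neg h]; exact Set.empty_subset _
  have hCmeas : ∀ n, MeasurableSet (C n) := by
    intro n
    by_cases h : n < 4
    · rw [hC]; simp only [dif_pos h]
      exact (Metric.isClosed_closedBall.measurableSet).inter Metric.isClosed_closedBall.measurableSet
    · rw [hC]; simp only [dif_neg h]; exact MeasurableSet.empty
  have hDmeas : ∀ n, MeasurableSet (D n) := MeasurableSet.disjointed hCmeas
  have hDC : ∀ n, D n ⊆ C n := fun n => disjointed_subset C n
  have hDK : ∀ n, D n ⊆ K := fun n => (hDC n).trans (hCK n)
  have hDdisj : Pairwise (Function.onFun Disjoint D) := disjoint_disjointed C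
  have hD4 : ∀ n, 4 ≤ n → D n = ∅ := by
    intro n hn
    have hCn : C n = ∅ := by rw [hC]; simp [Nat.not_lt.mpr hn]
    exact Set.eq_empty_of_subset_empty (hCn ▸ hDC n)
  have hUD : (⋃ n, D n) = K := by
    rw [hD, iUnion_disjointed]
    apply Set.Subset.antisymm (Set.iUnion_subset hCK)
    intro x hx
    obtain ⟨s, ⟨i, rfl⟩, hxs⟩ := hcover hx
    have hxs' : x ∈ Metric.closedBall (a i) (Real.sqrt 2 / 2) := by
      rw [← hBeq i]; exact hxs
    refine Set.mem_iUnion.2 ⟨i, ?_⟩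
    rw [hC]
    simp only [dif_pos i.isLt]
    exact ⟨hx, by simpa using hxs'⟩
  -- diameter bound on each piece
  have hdiam : ∀ n, ∀ x ∈ D n, ∀ y ∈ D n, ‖x - y‖ ≤ Real.sqrt 2 := by
    intro n x hx y hy
    have hx' := hDC n hx
    have hy' := hDC n hy
    rw [hC] at hx' hy'
    by_cases h : n < 4
    · simp only [dif_pos h] at hx' hy'
      have h1 : dist x (a ⟨n, h⟩) ≤ Real.sqrt 2 / 2 := Metric.mem_closedBall.1 hx'.2
      have h2 : dist y (a ⟨n, h⟩) ≤ Real.sqrt 2 / 2 := Metric.mem_closedBall.1 hy'.2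
      calc ‖x - y‖ = dist x y := (dist_eq_norm x y).symm
        _ ≤ dist x (a ⟨n, h⟩) + dist (a ⟨n, h⟩) y := dist_triangle _ _ _
        _ ≤ Real.sqrt 2 / 2 + Real.sqrt 2 / 2 := by
            rw [dist_comm (a ⟨n, h⟩) y]; exact add_le_add h1 h2
        _ = Real.sqrt 2 := by ring
    · simp only [dif_neg h] at hx'; exact absurd hx' (Set.notMem_empty x)
  set p : ℕ → ℝ := fun n => (ν (D n)).toReal with hp
  have hpnn : ∀ n, 0 ≤ p n := fun n => ENNReal.toReal_nonneg
  have hp1 : ∀ n, ν (D n) ≤ 1 := fun n => prob_le_one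
  -- sum of the p n is 1
  have hνU : ν (⋃ n, D n) = ∑' n, ν (D n) := measure_iUnion hDdisj hDmeas
  have htsum : (∑' n, ν (D n)) = ∑ n ∈ Finset.range 4, ν (D n) := by
    apply tsum_eq_sum
    intro n hn
    rw [hD4 n (by simpa using hn)]; simp
  have hsum1 : ∑ n ∈ Finset.range 4, p n = 1 := by
    have h4 : (∑ n ∈ Finset.range 4, ν (D n)) = 1 := by
      rw [← htsum, ← hνU, hUD, hν]
    calc ∑ n ∈ Finset.range 4, p n
        = (∑ n ∈ Finset.range 4, ν (D n)).toReal := by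
          rw [ENNReal.toReal_sum fun n _ => measure_ne_top ν _]
      _ = 1 := by rw [h4]; simp
  -- a.e. membership in K
  have haeK : ∀ᵐ y ∂ν, y ∈ K := by
    have hKm : MeasurableSet K := Metric.isClosed_closedBall.measurableSet
    have : ν Kᶜ = 0 := by
      rw [measure_compl hKm (measure_ne_top ν _), hν, measure_univ, tsub_self]
    exact (ae_iff.2 (by simpa [Set.compl_def] using this))
  -- integrability of the distance to a point
  have hint1 : ∀ x : E, Integrable (fun y => ‖x - y‖) ν := by
    intro x
    refine Integrable.mono' (integrable_const (‖x‖ + 1)) ?_ ?_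
    · exact (Continuous.norm (continuous_const.sub continuous_id)).aestronglyMeasurable
    · filter_upwards [haeK] with y hy
      have : ‖y‖ ≤ 1 := by simpa [hK] using hy
      calc ‖‖x - y‖‖ = ‖x - y‖ := norm_norm _
        _ ≤ ‖x‖ + ‖y‖ := norm_sub_le _ _
        _ ≤ ‖x‖ + 1 := by linarith
  -- inner bound
  have hinner : ∀ n, ∀ x ∈ D n, (∫ y, ‖x - y‖ ∂ν) ≤ 2 - (2 - Real.sqrt 2) * p n := by
    intro n x hx
    have hxK : x ∈ K := hDK n hx
    have hxn : ‖x‖ ≤ 1 := by simpa [hK] using hxK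
    set g : E → ℝ := fun y => (D n).indicator (fun _ => Real.sqrt 2) y
      + ((D n)ᶜ).indicator (fun _ => 2) y with hg
    have hg_int : Integrable g ν :=
      ((integrable_const _).indicator (hDmeas n)).add
        ((integrable_const _).indicator (hDmeas n).compl)
    have hmono : ∀ᵐ y ∂ν, ‖x - y‖ ≤ g y := by
      filter_upwards [haeK] with y hy
      by_cases hyD : y ∈ D n
      · have hgy : g y = Real.sqrt 2 := by
          simp only [hg]
          rw [Set.indicator_of_mem hyD, Set.indicator_of_notMem (by simp [hyD]), add_zero]
        rw [hgy]; exact hdiam n x hx y hyD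
      · have hgy : g y = 2 := by
          simp only [hg]
          rw [Set.indicator_of_notMem hyD, Set.indicator_of_mem (by simp [hyD]), zero_add]
        rw [hgy]
        have hyn : ‖y‖ ≤ 1 := by simpa [hK] using hy
        calc ‖x - y‖ ≤ ‖x‖ + ‖y‖ := norm_sub_le _ _
          _ ≤ 2 := by linarith
    have hcomp : ν (D n)ᶜ = 1 - ν (D n) := by
      rw [measure_compl (hDmeas n) (measure_ne_top ν _), measure_univ]
    have hgval : (∫ y, g y ∂ν) = 2 - (2 - Real.sqrt 2) * p n := by
      rw [hg, integral_add ((integrable_const _).indicator (hDmeas n))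
        ((integrable_const _).indicator (hDmeas n).compl),
        integral_indicator_const _ (hDmeas n), integral_indicator_const _ (hDmeas n).compl,
        measureReal_def, measureReal_def, hcomp]
      have : (1 - ν (D n)).toReal = 1 - p n := by
        rw [ENNReal.toReal_sub_of_le (hp1 n) ENNReal.one_ne_top]; simp [hp]
      rw [this]
      simp only [smul_eq_mul, hp]
      ring
    calc (∫ y, ‖x - y‖ ∂ν) ≤ ∫ y, g y ∂ν := integral_mono_ae (hint1 x) hg_int hmono
      _ = 2 - (2 - Real.sqrt 2) * p n := hgval
  -- the majorant
  set h : E → ℝ := fun x => 2 - (2 - Real.sqrt 2) *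
    ∑ n ∈ Finset.range 4, (D n).indicator (fun _ => p n) x with hh
  have hind_int : ∀ n, Integrable ((D n).indicator (fun _ => p n)) ν :=
    fun n => (integrable_const _).indicator (hDmeas n)
  have hs_int : Integrable (fun x => ∑ n ∈ Finset.range 4, (D n).indicator (fun _ => p n) x) ν :=
    integrable_finset_sum _ fun n _ => hind_int n
  have hh_int : Integrable h ν := by
    rw [hh]
    exact (integrable_const (2:ℝ)).sub (hs_int.const_mul _)
  -- the outer function
  set F : E → ℝ := fun x => ∫ y, ‖x - y‖ ∂ν with hF
  have hF_meas : AEStronglyMeasurable F ν := by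
    have hcont : Continuous (fun q : E × E => ‖q.1 - q.2‖) :=
      (continuous_fst.sub continuous_snd).norm
    exact (hcont.stronglyMeasurable.integral_prod_right').aestronglyMeasurable
  have hF_int : Integrable F ν := by
    refine Integrable.mono' (integrable_const 2) hF_meas ?_
    filter_upwards [haeK] with x hx
    have hxn : ‖x‖ ≤ 1 := by simpa [hK] using hx
    have hnn : 0 ≤ F x := integral_nonneg fun y => norm_nonneg _
    rw [Real.norm_of_nonneg hnn]
    calc F x ≤ ∫ _, (2:ℝ) ∂ν := by
          refine integral_mono_ae (hint1 x) (integrable_const _) ?_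
          filter_upwards [haeK] with y hy
          have hyn : ‖y‖ ≤ 1 := by simpa [hK] using hy
          calc ‖x - y‖ ≤ ‖x‖ + ‖y‖ := norm_sub_le _ _
            _ ≤ 2 := by linarith
      _ = 2 := by simp
  -- a.e. bound F ≤ h
  have haeD : ∀ᵐ x ∂ν, x ∈ ⋃ n, D n := by rw [hUD]; exact haeK
  have hFh : ∀ᵐ x ∂ν, F x ≤ h x := by
    filter_upwards [haeD] with x hx
    obtain ⟨n, hn⟩ := Set.mem_iUnion.1 hx
    have hn4 : n < 4 := by
      by_contra hc
      rw [hD4 n (Nat.le_of_not_lt hc)] at hn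
      exact hn
    have hsum : ∑ m ∈ Finset.range 4, (D m).indicator (fun _ => p m) x = p n := by
      rw [Finset.sum_eq_single n]
      · exact Set.indicator_of_mem hn _
      · intro m _ hmn
        exact Set.indicator_of_notMem
          (fun hm => (hDdisj hmn).le_bot ⟨hm, hn⟩) _
      · intro hcon; exact absurd (Finset.mem_range.2 hn4) hcon
    rw [hh]
    simp only [hsum]
    exact hinner n x hn
  -- compute ∫ h
  have hint_h : (∫ x, h x ∂ν) = 2 - (2 - Real.sqrt 2) * ∑ n ∈ Finset.range 4, p n ^ 2 := by
    rw [hh]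
    rw [integral_sub (integrable_const _) (hs_int.const_mul _), integral_const,
      integral_const_mul, integral_finset_sum _ fun n _ => hind_int n]
    have : ∀ n ∈ Finset.range 4,
        (∫ x, (D n).indicator (fun _ => p n) x ∂ν) = p n ^ 2 := by
      intro n _
      rw [integral_indicator_const _ (hDmeas n), measureReal_def]
      simp [hp, sq, mul_comm]
    rw [Finset.sum_congr rfl this]
    simp
  -- Cauchy-Schwarz
  have hCS : (1:ℝ) / 4 ≤ ∑ n ∈ Finset.range 4, p n ^ 2 := by
    have := sq_sum_le_card_mul_sum_sq (s := Finset.range 4) (f := p)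
    rw [hsum1] at this
    simp only [Finset.card_range] at this
    push_cast at this
    nlinarith [this]
  have hs2le : Real.sqrt 2 ≤ 2 := by
    nlinarith [Real.sq_sqrt (by norm_num : (2:ℝ) ≥ 0), Real.sqrt_nonneg 2]
  calc (∫ x, ∫ y, ‖x - y‖ ∂ν ∂ν) = ∫ x, F x ∂ν := rfl
    _ ≤ ∫ x, h x ∂ν := integral_mono_ae hF_int hh_int hFh
    _ = 2 - (2 - Real.sqrt 2) * ∑ n ∈ Finset.range 4, p n ^ 2 := hint_h
    _ ≤ 2 - (2 - Real.sqrt 2) * (1/4) := by nlinarith [hCS, hs2le]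
    _ = 3 / 2 + Real.sqrt 2 / 4 := by ring
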